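/- Let F: S¹ → S¹ be a continuous surjection. Then F is monotone if and only if F has degree one and, for every y ∈ S¹, the point preimage F⁻¹(y) is a connected proper subset of S¹ (equivalently, each point preimage is contractible). -/

import Mathlib

open Filter Topology

/-- `(a,b,c)` is a positively oriented triple on the circle `ℝ/ℤ`:
`b` lies in the open arc traversed counterclockwise from `a` to `c`. -/
def PosOriented (a b c : UnitAddCircle) : Prop :=
  ∃ x y z : ℝ, (x : UnitAddCircle) = a ∧ (y : UnitAddCircle) = b ∧
    (z : UnitAddCircle) = c ∧ x < y ∧ y < z ∧ z < x + 1

/-- Negatively oriented triple. -/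
def NegOriented (a b c : UnitAddCircle) : Prop := PosOriented c b a

/-- The open arc traversed counterclockwise from `a` to `b`. -/
def Arc (a b : UnitAddCircle) : Set UnitAddCircle := {x | PosOriented a x b}

/-- A homeomorphism of the circle is orientation-preserving if it sends every
positively oriented triple to a positively oriented triple. -/
def OrientationPreserving (h : UnitAddCircle ≃ₜ UnitAddCircle) : Prop :=
  ∀ a b c : UnitAddCircle, PosOriented a b c → PosOriented (h a) (h b) (h c)

/-- The fixed point set of a circle homeomorphism. -/
def FixSet (h : UnitAddCircle ≃ₜ UnitAddCircle) : Set UnitAddCircle := {x | h x = x}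

/-- `x` is an attracting fixed point (a sink) of `h`. -/
def IsAttractingFix (h : UnitAddCircle ≃ₜ UnitAddCircle) (x : UnitAddCircle) : Prop :=
  h x = x ∧ ∃ U : Set UnitAddCircle, IsOpen U ∧ x ∈ U ∧
    ∀ y ∈ U, Tendsto (fun n => (⇑h)^[n] y) atTop (𝓝 x)

/-- `x` is a repelling fixed point (a source) of `h`. -/
def IsRepellingFix (h : UnitAddCircle ≃ₜ UnitAddCircle) (x : UnitAddCircle) : Prop :=
  IsAttractingFix h.symm x

/-- A map of the circle is monotone on a set `A` if it sends no positively oriented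
triple of points of `A` to a negatively oriented one, and vice versa. -/
def MonotoneCircOn (f : UnitAddCircle → UnitAddCircle) (A : Set UnitAddCircle) : Prop :=
  ∀ a ∈ A, ∀ b ∈ A, ∀ c ∈ A,
    (PosOriented a b c → ¬ NegOriented (f a) (f b) (f c)) ∧
    (NegOriented a b c → ¬ PosOriented (f a) (f b) (f c))

/-- A continuous self-map of the circle has degree one if some (equivalently, every)
continuous lift `Ft : ℝ → ℝ` of `F` (meaning `e ∘ Ft = F ∘ e` for the projection
`e : ℝ → ℝ/ℤ`) satisfies `Ft (t+1) = Ft t + 1` for all `t`. -/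
def HasDegreeOne (F : UnitAddCircle → UnitAddCircle) : Prop :=
  ∃ Ft : ℝ → ℝ, Continuous Ft ∧
    (∀ t : ℝ, ((Ft t : ℝ) : UnitAddCircle) = F (t : UnitAddCircle)) ∧
    ∀ t : ℝ, Ft (t + 1) = Ft t + 1

noncomputable section Aux

local notation "e" => (QuotientAddGroup.mk : ℝ → UnitAddCircle)

lemma ecoe_eq {x y : ℝ} : (x : UnitAddCircle) = (y : UnitAddCircle) ↔ ∃ n : ℤ, y = x + n := by
  rw [QuotientAddGroup.eq_iff_sub_mem, AddSubgroup.mem_zmultiples_iff]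
  constructor
  · rintro ⟨n, hn⟩
    rw [zsmul_eq_mul, mul_one] at hn
    exact ⟨-n, by push_cast; linarith [hn]⟩
  · rintro ⟨n, hn⟩
    refine ⟨-n, ?_⟩
    rw [zsmul_eq_mul, mul_one]
    push_cast
    linarith [hn]

lemma ecoe_add_int (x : ℝ) (n : ℤ) : ((x + n : ℝ) : UnitAddCircle) = (x : UnitAddCircle) :=
  (ecoe_eq.2 ⟨n, rfl⟩).symm

lemma exists_rep_Ico (u : ℝ) (z : UnitAddCircle) :
    ∃ x : ℝ, x ∈ Set.Ico u (u + 1) ∧ (x : UnitAddCircle) = z := by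
  induction z using QuotientAddGroup.induction_on with
  | H v =>
    refine ⟨toIcoMod one_pos u v, toIcoMod_mem_Ico one_pos u v, ?_⟩
    rw [ecoe_eq]
    refine ⟨toIcoDiv one_pos u v, ?_⟩
    have := self_sub_toIcoMod one_pos u v
    rw [zsmul_eq_mul, mul_one] at this
    linarith [this]

lemma posOriented_mk {x y z : ℝ} (h1 : x < y) (h2 : y < z) (h3 : z < x + 1) :
    PosOriented x y z := ⟨x, y, z, rfl, rfl, rfl, h1, h2, h3⟩

lemma ne_of_between {x y : ℝ} (h1 : x < y) (h2 : y < x + 1) :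
    (x : UnitAddCircle) ≠ (y : UnitAddCircle) := by
  rw [Ne, ecoe_eq]
  rintro ⟨n, hn⟩
  have h0 : (0:ℝ) < n := by linarith
  have h1' : (n:ℝ) < 1 := by linarith
  have : (0:ℤ) < n := by exact_mod_cast h0
  have : n < 1 := by exact_mod_cast h1'
  omega

lemma PosOriented.ne {a b c : UnitAddCircle} (h : PosOriented a b c) :
    a ≠ b ∧ b ≠ c ∧ a ≠ c := by
  obtain ⟨x, y, z, ha, hb, hc, h1, h2, h3⟩ := h
  subst ha hb hc
  exact ⟨ne_of_between h1 (by linarith), ne_of_between h2 (by linarith),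
    ne_of_between (h1.trans h2) h3⟩

lemma int_ge_one_of_pos {n : ℤ} (h : (0:ℝ) < n) : (1:ℝ) ≤ n := by
  have : (0:ℤ) < n := by exact_mod_cast h
  exact_mod_cast this

lemma PosOriented.not_rev {a b c : UnitAddCircle} (h : PosOriented a b c) :
    ¬ PosOriented c b a := by
  obtain ⟨x, y, z, ha, hb, hc, h1, h2, h3⟩ := h
  rintro ⟨z', y', x', hc', hb', ha', k1, k2, k3⟩
  rw [← hc, ecoe_eq] at hc'
  rw [← hb, ecoe_eq] at hb'
  rw [← ha, ecoe_eq] at ha'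
  obtain ⟨nz, rfl⟩ := hc'
  obtain ⟨ny, rfl⟩ := hb'
  obtain ⟨nx, rfl⟩ := ha'
  have e1 : (1:ℝ) ≤ (nz : ℝ) - ny := by
    have := int_ge_one_of_pos (n := nz - ny) (by push_cast; linarith)
    push_cast at this ⊢; linarith
  have e2 : (1:ℝ) ≤ (ny : ℝ) - nx := by
    have := int_ge_one_of_pos (n := ny - nx) (by push_cast; linarith)
    push_cast at this ⊢; linarith
  linarith

lemma posOriented_trichotomy {a b c : UnitAddCircle} (hab : a ≠ b) (hbc : b ≠ c)
    (hac : a ≠ c) : PosOriented a b c ∨ PosOriented c b a := by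
  obtain ⟨x, -, rfl⟩ := exists_rep_Ico 0 a
  obtain ⟨y, hy, rfl⟩ := exists_rep_Ico x b
  obtain ⟨z, hz, rfl⟩ := exists_rep_Ico x c
  have hxy : x < y := lt_of_le_of_ne hy.1 (by rintro rfl; exact hab rfl)
  have hxz : x < z := lt_of_le_of_ne hz.1 (by rintro rfl; exact hac rfl)
  have hyz : y ≠ z := by rintro rfl; exact hbc rfl
  rcases lt_or_gt_of_ne hyz with h | h
  · exact Or.inl ⟨x, y, z, rfl, rfl, rfl, hxy, h, hz.2⟩
  · exact Or.inr ⟨z, y, x + 1, rfl, rfl, by simpa using ecoe_add_int x 1, h, hy.2, by linarith⟩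
section Lift

variable {F : UnitAddCircle → UnitAddCircle} {g : ℝ → ℝ}

/-- If the lift is monotone (nondecreasing) with `g (x+1) = g x + 1`, the induced circle
map is monotone. -/
lemma monotoneCircOn_of_monotone_lift (hg : Monotone g)
    (hper : ∀ x, g (x + 1) = g x + 1)
    (hFg : ∀ x : ℝ, F (x : UnitAddCircle) = ((g x : ℝ) : UnitAddCircle)) :
    MonotoneCircOn F Set.univ := by
  have key : ∀ x y z : ℝ, x < y → y < z → z < x + 1 →
      F (x:UnitAddCircle) ≠ F (y:UnitAddCircle) → F (y:UnitAddCircle) ≠ F (z:UnitAddCircle) →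
      F (x:UnitAddCircle) ≠ F (z:UnitAddCircle) →
      PosOriented (F x) (F y) (F z) := by
    intro x y z h1 h2 h3 n1 n2 n3
    rw [hFg x, hFg y, hFg z] at *
    have l1 : g x ≤ g y := hg h1.le
    have l2 : g y ≤ g z := hg h2.le
    have l3 : g z ≤ g x + 1 := by
      have := hg h3.le
      rwa [hper] at this
    refine ⟨g x, g y, g z, rfl, rfl, rfl, ?_, ?_, ?_⟩
    · exact lt_of_le_of_ne l1 (fun h => n1 (by rw [h]))
    · exact lt_of_le_of_ne l2 (fun h => n2 (by rw [h]))
    · refine lt_of_le_of_ne l3 (fun h => n3 ?_)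
      rw [h]
      exact_mod_cast (ecoe_add_int (g x) 1).symm
  intro a _ b _ c _
  constructor
  · rintro ⟨x, y, z, rfl, rfl, rfl, h1, h2, h3⟩ hneg
    obtain ⟨m1, m2, m3⟩ := hneg.ne
    exact hneg.not_rev (key x y z h1 h2 h3 m2.symm m1.symm m3.symm)
  · rintro ⟨z, y, x, rfl, rfl, rfl, h1, h2, h3⟩ hpos
    obtain ⟨m1, m2, m3⟩ := hpos.ne
    exact hpos.not_rev (key z y x h1 h2 h3 m2.symm m1.symm m3.symm)

lemma lift_add_int (hper : ∀ x, ∃ n : ℤ, g (x + 1) = g x + n) :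
    ∀ (x : ℝ) (k : ℤ), ∃ m : ℤ, g (x + k) = g x + m := by
  intro x k
  induction k using Int.induction_on with
  | zero => exact ⟨0, by simp⟩
  | succ n ih =>
    obtain ⟨m, hm⟩ := ih
    obtain ⟨n', hn'⟩ := hper (x + ((n : ℤ) : ℝ))
    refine ⟨m + n', ?_⟩
    push_cast at hm hn' ⊢
    have key : x + ((n : ℝ) + 1) = x + (n : ℝ) + 1 := by ring
    rw [key, hn', hm]
    ring
  | pred n ih =>
    obtain ⟨m, hm⟩ := ih
    obtain ⟨n', hn'⟩ := hper (x + ((-(n : ℤ) - 1 : ℤ) : ℝ))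
    refine ⟨m - n', ?_⟩
    push_cast at hm hn' ⊢
    have key : x + (-(n:ℝ) - 1) + 1 = x + -(n:ℝ) := by ring
    rw [key, hm] at hn'
    push_cast
    linarith [hn']

/-- The key disconnection lemma: if the lift takes values `≡ v` at `p, q` and values
`≢ v` at interleaved points `s, t` with `s < p < t < q < s+1`, then the fiber of `F`
over `e v` is disconnected. -/
lemma not_preconnected_fiber
    (hFg : ∀ x : ℝ, F (x : UnitAddCircle) = ((g x : ℝ) : UnitAddCircle))
    (hper : ∀ x, ∃ n : ℤ, g (x + 1) = g x + n)
    {v s p t q : ℝ} (h1 : s < p) (h2 : p < t) (h3 : t < q) (h4 : q < s + 1)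
    (hp : ∃ n : ℤ, g p = v + n) (hq : ∃ n : ℤ, g q = v + n)
    (hs : ∀ n : ℤ, g s ≠ v + n) (ht : ∀ n : ℤ, g t ≠ v + n) :
    ¬ IsPreconnected (F ⁻¹' {((v : ℝ) : UnitAddCircle)}) := by
  intro hconn
  set K := F ⁻¹' {((v : ℝ) : UnitAddCircle)} with hK
  have memK : ∀ x : ℝ, (x : UnitAddCircle) ∈ K ↔ ∃ n : ℤ, g x = v + n := by
    intro x
    simp only [hK, Set.mem_preimage, Set.mem_singleton_iff, hFg x]
    rw [show ((v:ℝ) : UnitAddCircle) = ((v:ℝ) : UnitAddCircle) from rfl]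
    constructor
    · intro h
      obtain ⟨n, hn⟩ := ecoe_eq.1 h
      exact ⟨-n, by push_cast; linarith⟩
    · rintro ⟨n, hn⟩
      exact ecoe_eq.2 ⟨-n, by push_cast; linarith⟩
  set U : Set UnitAddCircle := (QuotientAddGroup.mk : ℝ → UnitAddCircle) '' Set.Ioo s t with hU
  set V : Set UnitAddCircle := (QuotientAddGroup.mk : ℝ → UnitAddCircle) '' Set.Ioo t (s+1) with hV
  have hUopen : IsOpen U := QuotientAddGroup.isOpenMap_coe _ isOpen_Ioo
  have hVopen : IsOpen V := QuotientAddGroup.isOpenMap_coe _ isOpen_Ioo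
  have hcover : K ⊆ U ∪ V := by
    rintro w hw
    induction w using QuotientAddGroup.induction_on with
    | H u =>
      obtain ⟨u', hu', hval⟩ := exists_rep_Ico s (u : UnitAddCircle)
      obtain ⟨k, hk⟩ := ecoe_eq.1 hval
      -- hk : u = u' + k
      have hgu : ∃ n : ℤ, g u' = v + n := by
        obtain ⟨n, hn⟩ := (memK u).1 hw
        obtain ⟨m, hm⟩ := lift_add_int hper u' k
        rw [← hk] at hm
        rw [hm] at hn
        exact ⟨n - m, by push_cast; linarith⟩
      have hne_s : u' ≠ s := by
        rintro rfl; obtain ⟨n0, hn0⟩ := hgu; exact hs n0 hn0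
      have hne_t : u' ≠ t := by
        rintro rfl; obtain ⟨n0, hn0⟩ := hgu; exact ht n0 hn0
      rcases lt_or_gt_of_ne hne_t with h | h
      · exact Or.inl ⟨u', ⟨lt_of_le_of_ne hu'.1 (Ne.symm hne_s), h⟩, hval⟩
      · exact Or.inr ⟨u', ⟨h, hu'.2⟩, hval⟩
  have hdisj : U ∩ V = ∅ := by
    ext w
    simp only [Set.mem_inter_iff, Set.mem_empty_iff_false, iff_false, not_and]
    rintro ⟨x, hx, rfl⟩ ⟨y, hy, hxy⟩
    obtain ⟨n, hn⟩ := ecoe_eq.1 hxy.symm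
    have c1 : (0:ℝ) < n := by nlinarith [hx.1, hx.2, hy.1, hy.2]
    have c2 : (n:ℝ) < 1 := by nlinarith [hx.1, hx.2, hy.1, hy.2]
    have : (0:ℤ) < n := by exact_mod_cast c1
    have : n < 1 := by exact_mod_cast c2
    omega
  have hpU : ((p:ℝ) : UnitAddCircle) ∈ K ∩ U :=
    ⟨(memK p).2 hp, ⟨p, ⟨h1, h2⟩, rfl⟩⟩
  have hqV : ((q:ℝ) : UnitAddCircle) ∈ K ∩ V :=
    ⟨(memK q).2 hq, ⟨q, ⟨h3, h4⟩, rfl⟩⟩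
  obtain ⟨w, hw⟩ := hconn U V hUopen hVopen hcover ⟨_, hpU⟩ ⟨_, hqV⟩
  have : w ∈ U ∩ V := hw.2
  rw [hdisj] at this
  exact this

end Lift
section KL

variable {F : UnitAddCircle → UnitAddCircle} {g : ℝ → ℝ}

lemma monotone_of_halfstep (h : ∀ s t : ℝ, s ≤ t → t ≤ s + 2⁻¹ → g s ≤ g t) :
    Monotone g := by
  have key : ∀ n : ℕ, ∀ s t : ℝ, s ≤ t → t ≤ s + n * 2⁻¹ → g s ≤ g t := by
    intro n
    induction n with
    | zero => intro s t h1 h2; simp at h2; rw [le_antisymm h2 h1]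
    | succ n ih =>
      intro s t h1 h2
      set c := max s (t - 2⁻¹) with hc
      have hsc : s ≤ c := le_max_left _ _
      have hct : c ≤ t := max_le h1 (by linarith)
      have h3 : c ≤ s + n * 2⁻¹ := by
        rcases max_cases s (t - 2⁻¹) with ⟨h', _⟩ | ⟨h', _⟩ <;> rw [hc, h'] <;>
          push_cast at h2 ⊢ <;> [nlinarith [Nat.cast_nonneg (α := ℝ) n]; linarith]
      have h4 : t ≤ c + 2⁻¹ := by
        have := le_max_right s (t - 2⁻¹); linarith
      exact (ih s c hsc h3).trans (h c t hct h4)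
  intro s t hst
  obtain ⟨n, hn⟩ := exists_nat_gt ((t - s) * 2)
  exact key n s t hst (by push_cast at hn ⊢; linarith)

/-- If `F` has a continuous degree-one lift and all fibers of `F` are preconnected,
then the lift is nondecreasing. -/
lemma monotone_lift_of_preconnected_fibers (hgc : Continuous g)
    (hper : ∀ x, g (x + 1) = g x + 1)
    (hFg : ∀ x : ℝ, F (x : UnitAddCircle) = ((g x : ℝ) : UnitAddCircle))
    (hconn : ∀ y : UnitAddCircle, IsPreconnected (F ⁻¹' {y})) :
    Monotone g := by
  have hperZ : ∀ x, ∃ n : ℤ, g (x + 1) = g x + n := fun x => ⟨1, by rw [hper]; norm_num⟩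
  refine monotone_of_halfstep (fun s t h1 h2 => ?_)
  by_contra hlt
  push_neg at hlt
  have hst : s < t := by
    rcases lt_or_eq_of_le h1 with h | h
    · exact h
    · subst h; exact absurd rfl (ne_of_gt hlt)
  -- choose a generic value v
  set δ := min (g s - g t) 1 with hδ
  have hδpos : 0 < δ := by
    rw [hδ]; exact lt_min (by linarith) one_pos
  have hδle : δ ≤ 1 := min_le_right _ _
  have hδle' : δ ≤ g s - g t := min_le_left _ _
  have hchoice : ∃ v : ℝ, g t < v ∧ v < g t + δ ∧ (∀ n : ℤ, g s ≠ v + n) := by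
    by_contra hcon
    push_neg at hcon
    obtain ⟨n₁, hn₁⟩ := hcon (g t + δ/2) (by linarith) (by linarith)
    obtain ⟨n₂, hn₂⟩ := hcon (g t + δ/4) (by linarith) (by linarith)
    have : (n₂ : ℝ) - n₁ = δ/4 := by linarith
    have c1 : (0:ℝ) < (n₂ - n₁ : ℤ) := by push_cast; linarith
    have c2 : ((n₂ - n₁ : ℤ) : ℝ) < 1 := by push_cast; linarith
    have d1 : (0:ℤ) < n₂ - n₁ := by exact_mod_cast c1
    have d2 : (n₂ - n₁ : ℤ) < 1 := by exact_mod_cast c2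
    omega
  obtain ⟨v, hv1, hv2, hv3⟩ := hchoice
  have hvs : v < g s := by linarith
  have hvt1 : v < g t + 1 := by linarith
  -- crossing points
  have hp : ∃ p ∈ Set.Ioo s t, g p = v :=
    (intermediate_value_Ioo' h1 hgc.continuousOn) ⟨hv1, hvs⟩
  obtain ⟨p, hp1, hp2⟩ := hp
  have hq : ∃ q ∈ Set.Ioo t (s+1), g q = v := by
    refine (intermediate_value_Ioo (by linarith) hgc.continuousOn) ?_
    rw [hper]
    exact ⟨hv1, by linarith⟩
  obtain ⟨q, hq1, hq2⟩ := hq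
  have hsv : ∀ n : ℤ, g s ≠ v + n := hv3
  have htv : ∀ n : ℤ, g t ≠ v + n := by
    intro n hn
    -- v = g t - n with g t < v < g t + 1
    have c1 : (0:ℝ) < -n := by push_cast; linarith
    have c2 : (-n : ℝ) < 1 := by push_cast; linarith
    have d1 : (0:ℤ) < -n := by exact_mod_cast c1
    have d2 : (-n : ℤ) < 1 := by exact_mod_cast c2
    omega
  exact not_preconnected_fiber hFg hperZ hp1.1 hp1.2 hq1.1 hq1.2
    ⟨0, by simpa using hp2⟩ ⟨0, by simpa using hq2⟩ hsv htv (hconn _)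

end KL
section Fibers

variable {F : UnitAddCircle → UnitAddCircle}

lemma exists_third (y z : UnitAddCircle) : ∃ w : UnitAddCircle, w ≠ y ∧ w ≠ z := by
  have d12 : ((0:ℝ) : UnitAddCircle) ≠ ((1/3 : ℝ) : UnitAddCircle) :=
    ne_of_between (by norm_num) (by norm_num)
  have d23 : ((1/3:ℝ) : UnitAddCircle) ≠ ((2/3 : ℝ) : UnitAddCircle) :=
    ne_of_between (by norm_num) (by norm_num)
  have d13 : ((0:ℝ) : UnitAddCircle) ≠ ((2/3 : ℝ) : UnitAddCircle) :=
    ne_of_between (by norm_num) (by norm_num)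
  by_cases h1 : ((0:ℝ):UnitAddCircle) ≠ y ∧ ((0:ℝ):UnitAddCircle) ≠ z
  · exact ⟨_, h1⟩
  by_cases h2 : ((1/3:ℝ):UnitAddCircle) ≠ y ∧ ((1/3:ℝ):UnitAddCircle) ≠ z
  · exact ⟨_, h2⟩
  by_cases h3 : ((2/3:ℝ):UnitAddCircle) ≠ y ∧ ((2/3:ℝ):UnitAddCircle) ≠ z
  · exact ⟨_, h3⟩
  exfalso
  push_neg at h1 h2 h3
  by_cases hy1 : ((0:ℝ):UnitAddCircle) = y
  · have e2 : ((1/3:ℝ):UnitAddCircle) = z := h2 (fun h => d12 (h.trans hy1.symm).symm)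
    have e3 : ((2/3:ℝ):UnitAddCircle) = z := h3 (fun h => d13 (h.trans hy1.symm).symm)
    exact d23 (e2.trans e3.symm)
  · have e1 : ((0:ℝ):UnitAddCircle) = z := h1 hy1
    by_cases hy2 : ((1/3:ℝ):UnitAddCircle) = y
    · have e3 : ((2/3:ℝ):UnitAddCircle) = z := h3 (fun h => d23 (hy2.trans h.symm).symm.symm)
      exact d13 (e1.trans e3.symm)
    · have e2 : ((1/3:ℝ):UnitAddCircle) = z := h2 hy2
      exact d12 (e1.trans e2.symm)

lemma fiber_ne_univ (hsurj : Function.Surjective F) (y : UnitAddCircle) :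
    F ⁻¹' {y} ≠ Set.univ := by
  obtain ⟨y', hy', -⟩ := exists_third y y
  obtain ⟨x', hx'⟩ := hsurj y'
  intro h
  have : x' ∈ F ⁻¹' {y} := h ▸ Set.mem_univ x'
  rw [Set.mem_preimage, Set.mem_singleton_iff, hx'] at this
  exact hy' this

lemma fiber_preconnected (hF : Continuous F) (hsurj : Function.Surjective F)
    (hmono : MonotoneCircOn F Set.univ) (y : UnitAddCircle) :
    IsPreconnected (F ⁻¹' {y}) := by
  by_contra hnc
  set K := F ⁻¹' {y} with hKdef
  have memK : ∀ w, w ∈ K ↔ F w = y := fun w => Iff.rfl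
  rw [IsPreconnected] at hnc
  push_neg at hnc
  obtain ⟨U, V, hUo, hVo, hcov, ⟨a, haK, haU⟩, ⟨b, hbK, hbV⟩, hempty⟩ := hnc
  have hemp : ∀ w, w ∈ K → w ∈ U → w ∈ V → False := by
    intro w h1 h2 h3
    have : w ∈ K ∩ (U ∩ V) := ⟨h1, h2, h3⟩
    rw [hempty] at this
    exact this
  have hab : a ≠ b := by
    rintro rfl
    exact hemp a haK haU hbV
  obtain ⟨xa, -, rfl⟩ := exists_rep_Ico 0 a
  obtain ⟨xb, hxb, rfl⟩ := exists_rep_Ico xa b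
  have hxab : xa < xb := lt_of_le_of_ne hxb.1 (by rintro rfl; exact hab rfl)
  have hxb1 : xb < xa + 1 := hxb.2
  have ha1 : ((xa + 1 : ℝ) : UnitAddCircle) = (xa : UnitAddCircle) := by
    simpa using ecoe_add_int xa 1
  -- a closed arc inside K joining points of U and V gives a contradiction
  have harc : ∀ u v : ℝ, u < v →
      ((u:ℝ) : UnitAddCircle) ∈ K → ((v:ℝ) : UnitAddCircle) ∈ K →
      (((u:ℝ) : UnitAddCircle) ∈ U ∧ ((v:ℝ) : UnitAddCircle) ∈ V ∨
       ((u:ℝ) : UnitAddCircle) ∈ V ∧ ((v:ℝ) : UnitAddCircle) ∈ U) →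
      ¬ (∀ w ∈ Set.Icc u v, ((w:ℝ) : UnitAddCircle) ∈ K) := by
    intro u v huv hKu hKv hmem hall
    have hC : IsPreconnected ((QuotientAddGroup.mk : ℝ → UnitAddCircle) '' Set.Icc u v) :=
      isPreconnected_Icc.image _ (continuous_quotient_mk'.continuousOn)
    have hsub : (QuotientAddGroup.mk : ℝ → UnitAddCircle) '' Set.Icc u v ⊆ U ∪ V := by
      rintro w ⟨x, hx, rfl⟩
      exact hcov (hall x hx)
    have humem : ((u:ℝ) : UnitAddCircle) ∈ (QuotientAddGroup.mk : ℝ → UnitAddCircle) '' Set.Icc u v :=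
      ⟨u, ⟨le_refl u, huv.le⟩, rfl⟩
    have hvmem : ((v:ℝ) : UnitAddCircle) ∈ (QuotientAddGroup.mk : ℝ → UnitAddCircle) '' Set.Icc u v :=
      ⟨v, ⟨huv.le, le_refl v⟩, rfl⟩
    rcases hmem with ⟨h1, h2⟩ | ⟨h1, h2⟩
    · obtain ⟨w, hwC, hwUV⟩ := hC U V hUo hVo hsub ⟨_, humem, h1⟩ ⟨_, hvmem, h2⟩
      obtain ⟨x, hx, rfl⟩ := hwC
      exact hemp _ (hall x hx) hwUV.1 hwUV.2
    · obtain ⟨w, hwC, hwUV⟩ := hC V U hVo hUo (hsub.trans (Set.union_subset_union_right _ (le_refl _)) |>.trans (by rw [Set.union_comm])) ⟨_, humem, h1⟩ ⟨_, hvmem, h2⟩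
      obtain ⟨x, hx, rfl⟩ := hwC
      exact hemp _ (hall x hx) hwUV.2 hwUV.1
  -- non-K points exist in both open arcs
  have hc1 : ∃ c ∈ Set.Ioo xa xb, ((c:ℝ) : UnitAddCircle) ∉ K := by
    by_contra hcon
    push_neg at hcon
    refine harc xa xb hxab haK hbK (Or.inl ⟨haU, hbV⟩) (fun w hw => ?_)
    rcases eq_or_lt_of_le hw.1 with h | hl
    · rw [← h]; exact haK
    rcases eq_or_lt_of_le hw.2 with h | hr
    · rw [h]; exact hbK
    exact hcon w ⟨hl, hr⟩
  have hc2 : ∃ c ∈ Set.Ioo xb (xa + 1), ((c:ℝ) : UnitAddCircle) ∉ K := by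
    by_contra hcon
    push_neg at hcon
    refine harc xb (xa + 1) hxb1 hbK (by rw [ha1]; exact haK)
      (Or.inr ⟨hbV, by rw [ha1]; exact haU⟩) (fun w hw => ?_)
    rcases eq_or_lt_of_le hw.1 with h | hl
    · rw [← h]; exact hbK
    rcases eq_or_lt_of_le hw.2 with h | hr
    · rw [h, ha1]; exact haK
    exact hcon w ⟨hl, hr⟩
  obtain ⟨c1, hc1m, hc1K⟩ := hc1
  obtain ⟨c2, hc2m, hc2K⟩ := hc2
  -- all non-K points in opposite arcs have the same image
  have key : ∀ u ∈ Set.Ioo xa xb, ((u:ℝ) : UnitAddCircle) ∉ K →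
      ∀ w ∈ Set.Ioo xb (xa+1), ((w:ℝ) : UnitAddCircle) ∉ K →
      F ((u:ℝ) : UnitAddCircle) = F ((w:ℝ) : UnitAddCircle) := by
    intro u hu hunK w hw hwnK
    by_contra hne
    have hFu : F ((u:ℝ):UnitAddCircle) ≠ y := fun h => hunK h
    have hFw : F ((w:ℝ):UnitAddCircle) ≠ y := fun h => hwnK h
    have T1 : PosOriented ((u:ℝ):UnitAddCircle) ((xb:ℝ):UnitAddCircle) ((w:ℝ):UnitAddCircle) :=
      posOriented_mk hu.2 hw.1 (by linarith [hu.1, hw.2])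
    have mono1 := (hmono _ (Set.mem_univ _) _ (Set.mem_univ _) _ (Set.mem_univ _)).1 T1
    have T2 : PosOriented ((w:ℝ):UnitAddCircle) ((xa:ℝ):UnitAddCircle) ((u:ℝ):UnitAddCircle) := by
      have := posOriented_mk (x := w) (y := xa + 1) (z := u + 1)
        hw.2 (by linarith [hu.1]) (by linarith [hu.2, hw.1])
      rwa [ha1, show ((u + 1 : ℝ) : UnitAddCircle) = ((u:ℝ):UnitAddCircle) by
        simpa using ecoe_add_int u 1] at this
    have mono2 := (hmono _ (Set.mem_univ _) _ (Set.mem_univ _) _ (Set.mem_univ _)).1 T2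
    rw [NegOriented] at mono1 mono2
    rw [show F ((xb:ℝ):UnitAddCircle) = y from hbK] at mono1
    rw [show F ((xa:ℝ):UnitAddCircle) = y from haK] at mono2
    rcases posOriented_trichotomy hFu (Ne.symm hFw) hne with h | h
    · exact mono2 h
    · exact mono1 h
  set z := F ((c1:ℝ):UnitAddCircle) with hz
  have hzc2 : F ((c2:ℝ):UnitAddCircle) = z := (key c1 hc1m hc1K c2 hc2m hc2K).symm
  obtain ⟨y₃, hy₃y, hy₃z⟩ := exists_third y z
  obtain ⟨w₀, hw₀⟩ := hsurj y₃
  obtain ⟨u, hu, rfl⟩ := exists_rep_Ico xa w₀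
  have hunK : ((u:ℝ):UnitAddCircle) ∉ K := by
    intro h
    rw [memK] at h
    exact hy₃y (hw₀ ▸ h)
  have hua : u ≠ xa := by
    rintro rfl
    exact hy₃y (hw₀ ▸ haK)
  have hub : u ≠ xb := by
    rintro rfl
    exact hy₃y (hw₀ ▸ hbK)
  rcases lt_or_gt_of_ne hub with h | h
  · have := key u ⟨lt_of_le_of_ne hu.1 (Ne.symm hua), h⟩ hunK c2 hc2m hc2K
    rw [hw₀, hzc2] at this
    exact hy₃z this
  · have := key c1 hc1m hc1K u ⟨h, hu.2⟩ hunK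
    rw [hw₀, ← hz] at this
    exact hy₃z this.symm

end Fibers
section LiftConstruction

/-- Representative of a circle point in `[-1/2, 1/2)`. -/
noncomputable def rep (z : UnitAddCircle) : ℝ :=
  (AddCircle.equivIco 1 (-(2⁻¹:ℝ)) z : ℝ)

lemma rep_mem (z : UnitAddCircle) : rep z ∈ Set.Ico (-(2⁻¹:ℝ)) (-(2⁻¹:ℝ)+1) :=
  (AddCircle.equivIco 1 (-(2⁻¹:ℝ)) z).2

lemma coe_rep (z : UnitAddCircle) : ((rep z : ℝ) : UnitAddCircle) = z :=
  (AddCircle.equivIco 1 (-(2⁻¹:ℝ))).symm_apply_apply z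

lemma rep_zero : rep (0 : UnitAddCircle) = 0 := by
  have h0 : (0:ℝ) ∈ Set.Ico (-(2⁻¹:ℝ)) (-(2⁻¹:ℝ)+1) := by constructor <;> norm_num
  have : ((0:ℝ) : UnitAddCircle) = (0 : UnitAddCircle) := by norm_num
  rw [rep, ← this]
  rw [AddCircle.equivIco, QuotientAddGroup.equivIcoMod_coe]
  simp only
  rw [(toIcoMod_eq_self _).2 h0]

lemma norm_half : ‖((↑(-(2⁻¹:ℝ))) : UnitAddCircle)‖ = 2⁻¹ := by
  rw [UnitAddCircle.norm_eq]
  have : round (-(2⁻¹:ℝ)) = 0 := by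
    rw [round_eq]
    norm_num
  rw [this]
  norm_num

lemma rep_continuousAt {z : UnitAddCircle} (hz : ‖z‖ < 2⁻¹) : ContinuousAt rep z := by
  have hne : z ≠ ((↑(-(2⁻¹:ℝ))) : UnitAddCircle) := by
    intro h
    rw [h, norm_half] at hz
    exact lt_irrefl _ hz
  exact continuousAt_subtype_val.comp (AddCircle.continuousAt_equivIco 1 (-(2⁻¹:ℝ)) hne)

variable {F : UnitAddCircle → UnitAddCircle}

lemma exists_lift (hF : Continuous F) :
    ∃ g : ℝ → ℝ, Continuous g ∧ ∀ x : ℝ, F (x : UnitAddCircle) = ((g x : ℝ) : UnitAddCircle) := by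
  classical
  set h : ℝ → UnitAddCircle := fun x => F (x : UnitAddCircle) with hh
  have hhc : Continuous h := hF.comp continuous_quotient_mk'
  have huc : UniformContinuous F := CompactSpace.uniformContinuous_of_continuous hF
  obtain ⟨δ, hδpos, hδ⟩ := Metric.uniformContinuous_iff.1 huc 4⁻¹ (by norm_num)
  have hlip : ∀ x y : ℝ, |x - y| < δ → dist (h x) (h y) < 4⁻¹ := by
    intro x y hxy
    apply hδ
    have key : dist ((x : UnitAddCircle)) ((y : UnitAddCircle)) ≤ |x - y| := by
      rw [dist_eq_norm, ← QuotientAddGroup.mk_sub, ← Real.norm_eq_abs]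
      exact QuotientAddGroup.norm_mk_le_norm
    exact lt_of_le_of_lt key hxy
  set ε : ℝ := min (δ/2) 1 with hε
  have hεpos : 0 < ε := lt_min (by linarith) one_pos
  have hεδ : ε < δ := lt_of_le_of_lt (min_le_left _ _) (by linarith)
  have hosc : ∀ (k : ℤ) (x : ℝ), x ∈ Set.Icc ((k:ℝ)*ε) (((k:ℝ)+1)*ε) →
      dist (h x) (h ((k:ℝ)*ε)) < 4⁻¹ := by
    intro k x hx
    apply hlip
    rw [abs_sub_lt_iff]
    constructor
    · calc x - (k:ℝ)*ε ≤ ((k:ℝ)+1)*ε - (k:ℝ)*ε := by linarith [hx.2]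
        _ = ε := by ring
        _ < δ := hεδ
    · linarith [hx.1]
  set d : ℤ → ℝ := fun k => rep (h (((k:ℝ)+1)*ε) - h ((k:ℝ)*ε)) with hd
  set S : ℤ → ℝ := fun k =>
    (∑ j ∈ Finset.range k.toNat, d j) - ∑ j ∈ Finset.range (-k).toNat, d (-(j+1)) with hS
  have Ssucc : ∀ k : ℤ, S (k+1) = S k + d k := by
    intro k
    rcases le_or_gt 0 k with hk | hk
    · have h1 : (k+1).toNat = k.toNat + 1 := by omega
      have h2 : (-(k+1)).toNat = 0 := by omega
      have h3 : (-k).toNat = 0 := by omega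
      have h4 : ((k.toNat : ℤ)) = k := by omega
      rw [hS]
      simp only [h1, h2, h3, Finset.sum_range_succ, Finset.range_zero, Finset.sum_empty]
      rw [h4]
      ring
    · have h1 : (k+1).toNat = 0 := by omega
      have h2 : k.toNat = 0 := by omega
      have h3 : (-k).toNat = (-(k+1)).toNat + 1 := by omega
      rw [hS]
      simp only [h1, h2, h3, Finset.sum_range_succ, Finset.range_zero, Finset.sum_empty]
      have h5 : -(((-(k+1)).toNat : ℤ) + 1) = k := by omega
      rw [h5]
      ring
  set c : ℤ → ℝ := fun k => rep (h 0) + S k with hc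
  have csucc : ∀ k : ℤ, c (k+1) = c k + d k := by
    intro k
    rw [hc]
    simp only
    rw [Ssucc]
    ring
  have hS0 : S 0 = 0 := by rw [hS]; simp
  have ec0 : ((c 0 : ℝ) : UnitAddCircle) = h 0 := by
    rw [hc]
    simp only [hS0, add_zero]
    exact coe_rep (h 0)
  have eck : ∀ k : ℤ, ((c k : ℝ) : UnitAddCircle) = h ((k:ℝ)*ε) := by
    intro k
    induction k using Int.induction_on with
    | zero =>
      rw [show ((0:ℤ):ℝ)*ε = 0 by push_cast; ring]
      exact ec0
    | succ n ih =>
      have harg : (((n:ℤ) + 1 : ℤ) : ℝ) = (((n:ℤ)) : ℝ) + 1 := by push_cast; ring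
      rw [harg, csucc, QuotientAddGroup.mk_add, ih, hd]
      simp only
      rw [coe_rep]
      abel
    | pred n ih =>
      have hstep := csucc (-(n:ℤ)-1)
      rw [show (-(n:ℤ)-1+1 : ℤ) = -(n:ℤ) by ring] at hstep
      have hrew : c (-(n:ℤ)-1) = c (-(n:ℤ)) - d (-(n:ℤ)-1) := by rw [hstep]; ring
      rw [hrew, QuotientAddGroup.mk_sub, ih, hd]
      simp only
      rw [coe_rep]
      have e1 : ((-(n:ℤ)-1 : ℤ) : ℝ) + 1 = ((-(n:ℤ) : ℤ) : ℝ) := by push_cast; ring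
      rw [e1]
      abel
  set g : ℝ → ℝ := fun x => c ⌊x / ε⌋ + rep (h x - h ((⌊x / ε⌋ : ℝ) * ε)) with hg
  have hfloor : ∀ x : ℝ, (⌊x / ε⌋ : ℝ) * ε ≤ x ∧ x < ((⌊x / ε⌋ : ℝ)+1) * ε := by
    intro x
    constructor
    · calc (⌊x / ε⌋ : ℝ) * ε ≤ (x / ε) * ε := by
            have := Int.floor_le (x / ε)
            nlinarith
        _ = x := by field_simp
    · calc x = (x / ε) * ε := by field_simp
        _ < ((⌊x / ε⌋ : ℝ)+1) * ε := by
            have := Int.lt_floor_add_one (x / ε)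
            nlinarith
  have hg_eq : ∀ x : ℝ, ((g x : ℝ) : UnitAddCircle) = h x := by
    intro x
    rw [hg]
    simp only
    rw [QuotientAddGroup.mk_add, eck, coe_rep]
    abel
  have g_on : ∀ (k : ℤ), ∀ x ∈ Set.Icc ((k:ℝ)*ε) (((k:ℝ)+1)*ε),
      g x = c k + rep (h x - h ((k:ℝ)*ε)) := by
    intro k x hx
    rcases lt_or_eq_of_le hx.2 with hlt | heq
    · have hfl : ⌊x / ε⌋ = k := by
        rw [Int.floor_eq_iff]
        constructor
        · rw [le_div_iff₀ hεpos]; exact hx.1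
        · rw [div_lt_iff₀ hεpos]; push_cast; linarith
      rw [hg]; simp only [hfl]
    · have hfl : ⌊x / ε⌋ = k + 1 := by
        rw [Int.floor_eq_iff]
        constructor
        · push_cast
          rw [le_div_iff₀ hεpos]
          linarith [heq]
        · push_cast
          rw [div_lt_iff₀ hεpos]
          nlinarith [heq, hεpos]
      rw [hg]
      simp only [hfl]
      have e2 : (((k + 1 : ℤ)) : ℝ) = (k:ℝ) + 1 := by push_cast; ring
      rw [e2, heq, sub_self, rep_zero, add_zero, csucc, hd]
  have cont_on : ∀ k : ℤ, ContinuousOn g (Set.Icc ((k:ℝ)*ε) (((k:ℝ)+1)*ε)) := by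
    intro k
    apply ContinuousOn.congr (f := fun x => c k + rep (h x - h ((k:ℝ)*ε)))
    · intro x hx
      apply ContinuousAt.continuousWithinAt
      have hin : ContinuousAt (fun y : ℝ => h y - h ((k:ℝ)*ε)) x :=
        (hhc.sub continuous_const).continuousAt
      have hrep : ContinuousAt rep (h x - h ((k:ℝ)*ε)) := by
        apply rep_continuousAt
        have := hosc k x hx
        rw [dist_eq_norm] at this
        calc ‖h x - h ((k:ℝ)*ε)‖ < 4⁻¹ := this
          _ < 2⁻¹ := by norm_num
      exact continuousAt_const.add (ContinuousAt.comp (f := fun y : ℝ => h y - h ((k:ℝ)*ε)) hrep hin)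
    · intro x hx
      exact g_on k x hx
  have hgc : Continuous g := by
    rw [continuous_iff_continuousAt]
    intro x
    set k : ℤ := ⌊x / ε⌋ with hk
    have hx := hfloor x
    have cwB : ContinuousWithinAt g (Set.Icc ((k:ℝ)*ε) (((k:ℝ)+1)*ε)) x :=
      (cont_on k).continuousWithinAt ⟨hx.1, hx.2.le⟩
    have hcast : ((k-1:ℤ):ℝ) = (k:ℝ)-1 := by push_cast; ring
    have hIcc : Set.Icc ((((k-1):ℤ):ℝ)*ε) (((((k-1):ℤ):ℝ)+1)*ε)
        = Set.Icc (((k:ℝ)-1)*ε) ((k:ℝ)*ε) := by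
      rw [hcast]
      congr 1
      ring
    have cwA : ContinuousWithinAt g (Set.Icc (((k:ℝ)-1)*ε) ((k:ℝ)*ε)) x := by
      rcases eq_or_lt_of_le hx.1 with heq | hlt
      · have hmem : x ∈ Set.Icc ((((k-1):ℤ):ℝ)*ε) (((((k-1):ℤ):ℝ)+1)*ε) := by
          rw [hIcc]
          constructor
          · rw [← heq]; nlinarith [hεpos]
          · rw [← heq]
        have := (cont_on (k-1)).continuousWithinAt hmem
        rwa [hIcc] at this
      · apply continuousWithinAt_of_notMem_closure
        rw [IsClosed.closure_eq isClosed_Icc]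
        intro hmem
        have := hmem.2
        nlinarith [hmem.2]
    have cwU : ContinuousWithinAt g
        (Set.Icc (((k:ℝ)-1)*ε) ((k:ℝ)*ε) ∪ Set.Icc ((k:ℝ)*ε) (((k:ℝ)+1)*ε)) x := cwA.union cwB
    have hun : Set.Icc (((k:ℝ)-1)*ε) ((k:ℝ)*ε) ∪ Set.Icc ((k:ℝ)*ε) (((k:ℝ)+1)*ε)
        = Set.Icc (((k:ℝ)-1)*ε) (((k:ℝ)+1)*ε) := by
      apply Set.Icc_union_Icc_eq_Icc <;> nlinarith [hεpos]
    rw [hun] at cwU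
    apply cwU.continuousAt
    apply Icc_mem_nhds
    · nlinarith [hx.1, hεpos]
    · nlinarith [hx.2, hεpos]
  exact ⟨g, hgc, fun x => (hg_eq x).symm⟩

end LiftConstruction
section Degree

variable {F : UnitAddCircle → UnitAddCircle} {g : ℝ → ℝ}

lemma exists_degree (hgc : Continuous g)
    (hFg : ∀ x : ℝ, F (x : UnitAddCircle) = ((g x : ℝ) : UnitAddCircle)) :
    ∃ dg : ℤ, ∀ x, g (x+1) = g x + dg := by
  have hper : ∀ x : ℝ, ∃ n : ℤ, g (x + 1) = g x + n := by
    intro x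
    have h1 : ((g x : ℝ) : UnitAddCircle) = ((g (x+1) : ℝ) : UnitAddCircle) := by
      rw [← hFg, ← hFg]
      congr 1
      have h2 : ((x + (1:ℝ) : ℝ) : UnitAddCircle) = (x : UnitAddCircle) := by
        simpa using ecoe_add_int x 1
      exact h2.symm
    exact ecoe_eq.1 h1
  obtain ⟨d0, hd0⟩ := hper 0
  refine ⟨d0, fun x => ?_⟩
  obtain ⟨dx, hdx⟩ := hper x
  rw [hdx]
  congr 1
  by_contra hne
  have hdxd0 : dx ≠ d0 := fun h => hne (by rw [h])
  set φ : ℝ → ℝ := fun t => g (t+1) - g t with hφ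
  have hφc : Continuous φ := (hgc.comp (continuous_id.add continuous_const)).sub hgc
  have hφx : φ x = dx := by rw [hφ]; simp only; rw [hdx]; ring
  have hφ0 : φ 0 = d0 := by rw [hφ]; simp only; rw [hd0]; ring
  have key : ∀ cv : ℝ, cv ∈ Set.uIcc (φ x) (φ 0) → (∀ n : ℤ, cv ≠ n) → False := by
    intro cv hcv hcvn
    obtain ⟨u, -, hu⟩ := intermediate_value_uIcc (hφc.continuousOn) hcv
    obtain ⟨m, hm⟩ := hper u
    have : φ u = m := by rw [hφ]; simp only; rw [hm]; ring
    exact hcvn m (by rw [← hu, this])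
  rcases lt_or_gt_of_ne hdxd0 with h | h
  · have hle : (dx:ℝ) ≤ (d0:ℝ) - 1 := by
      have h' : ((dx + 1 : ℤ) : ℝ) ≤ ((d0 : ℤ) : ℝ) := by exact_mod_cast (by omega : dx + 1 ≤ d0)
      push_cast at h'
      linarith
    refine key ((d0:ℝ) - 2⁻¹) (Set.mem_uIcc.2 (Or.inl ⟨by rw [hφx]; linarith, by rw [hφ0]; linarith⟩)) ?_
    intro n hn
    have : (2*(d0 - n) : ℝ) = 1 := by push_cast; linarith
    have : (2*(d0 - n) : ℤ) = 1 := by exact_mod_cast this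
    omega
  · have hle : (d0:ℝ) ≤ (dx:ℝ) - 1 := by
      have h' : ((d0 + 1 : ℤ) : ℝ) ≤ ((dx : ℤ) : ℝ) := by exact_mod_cast (by omega : d0 + 1 ≤ dx)
      push_cast at h'
      linarith
    refine key ((dx:ℝ) - 2⁻¹) (Set.mem_uIcc.2 (Or.inr ⟨by rw [hφ0]; linarith, by rw [hφx]; linarith⟩)) ?_
    intro n hn
    have : (2*(dx - n) : ℝ) = 1 := by push_cast; linarith
    have : (2*(dx - n) : ℤ) = 1 := by exact_mod_cast this
    omega

lemma not_int_half (v : ℝ) : ∀ n : ℤ, v + 2⁻¹ ≠ v + n := by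
  intro n hn
  have : (2*n : ℝ) = 1 := by push_cast; linarith
  have : (2*n : ℤ) = 1 := by exact_mod_cast this
  omega

lemma not_int_three_half (v : ℝ) : ∀ n : ℤ, v + 1 + 2⁻¹ ≠ v + n := by
  intro n hn
  have : (2*n : ℝ) = 3 := by push_cast; linarith
  have : (2*n : ℤ) = 3 := by exact_mod_cast this
  omega

lemma degree_ge_two_absurd (hgc : Continuous g)
    (hFg : ∀ x : ℝ, F (x : UnitAddCircle) = ((g x : ℝ) : UnitAddCircle))
    (hconn : ∀ y : UnitAddCircle, IsPreconnected (F ⁻¹' {y}))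
    {dg : ℤ} (hdg : 2 ≤ dg) (hper : ∀ x, g (x+1) = g x + dg) : False := by
  have hperZ : ∀ x, ∃ n : ℤ, g (x + 1) = g x + n := fun x => ⟨dg, hper x⟩
  have hg1 : g 1 = g 0 + dg := by simpa using hper 0
  have hdg2 : (2:ℝ) ≤ (dg:ℝ) := by exact_mod_cast hdg
  -- x₁ ∈ (0,1) with g x₁ = g 0 + 1
  obtain ⟨x₁, hx₁m, hx₁⟩ : ∃ x ∈ Set.Ioo (0:ℝ) 1, g x = g 0 + 1 := by
    apply intermediate_value_Ioo (by norm_num) hgc.continuousOn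
    rw [hg1]
    constructor <;> linarith
  obtain ⟨u₁, hu₁m, hu₁⟩ : ∃ u ∈ Set.Ioo (0:ℝ) x₁, g u = g 0 + 2⁻¹ := by
    apply intermediate_value_Ioo hx₁m.1.le hgc.continuousOn
    rw [hx₁]
    constructor <;> norm_num
  obtain ⟨u₂, hu₂m, hu₂⟩ : ∃ u ∈ Set.Ioo x₁ 1, g u = g 0 + 1 + 2⁻¹ := by
    apply intermediate_value_Ioo hx₁m.2.le hgc.continuousOn
    rw [hx₁, hg1]
    constructor <;> [norm_num; linarith]
  refine not_preconnected_fiber hFg hperZ (v := g 0)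
    hu₁m.2 hu₂m.1 hu₂m.2 (by linarith [hu₁m.1]) ⟨1, by rw [hx₁]; norm_num⟩
    ⟨dg, hg1⟩ ?_ ?_ (hconn _)
  · rw [hu₁]; exact not_int_half _
  · rw [hu₂]; exact not_int_three_half _

lemma degree_zero_absurd (hgc : Continuous g)
    (hFg : ∀ x : ℝ, F (x : UnitAddCircle) = ((g x : ℝ) : UnitAddCircle))
    (hsurj : Function.Surjective F)
    (hconn : ∀ y : UnitAddCircle, IsPreconnected (F ⁻¹' {y}))
    (hper : ∀ x, g (x+1) = g x) : False := by
  have hperZ : ∀ x, ∃ n : ℤ, g (x + 1) = g x + n := fun x => ⟨0, by rw [hper]; norm_num⟩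
  have hper_int : ∀ (x : ℝ) (n : ℤ), g (x + n) = g x := by
    intro x n
    induction n using Int.induction_on with
    | zero => simp
    | succ n ih =>
      have harg : (((n:ℤ) + 1 : ℤ) : ℝ) = (((n:ℤ)) : ℝ) + 1 := by push_cast; ring
      rw [harg, ← add_assoc, hper, ih]
    | pred n ih =>
      have hstep := hper (x + ((-(n:ℤ)-1 : ℤ) : ℝ))
      have harg : x + ((-(n:ℤ)-1 : ℤ) : ℝ) + 1 = x + ((-(n:ℤ) : ℤ) : ℝ) := by push_cast; ring
      rw [harg, ih] at hstep
      rw [← hstep]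
  -- extremes on [0,1]
  obtain ⟨xM, hxMm, hxM⟩ := isCompact_Icc.exists_isMaxOn (Set.nonempty_Icc.2 zero_le_one)
    hgc.continuousOn
  obtain ⟨xm, hxmm, hxm⟩ := isCompact_Icc.exists_isMinOn (Set.nonempty_Icc.2 zero_le_one)
    hgc.continuousOn
  set M := g xM with hM
  set m := g xm with hm
  have hbound : ∀ x : ℝ, m ≤ g x ∧ g x ≤ M := by
    intro x
    have hfr : Int.fract x ∈ Set.Icc (0:ℝ) 1 := ⟨Int.fract_nonneg x, (Int.fract_lt_one x).le⟩
    have : g x = g (Int.fract x) := by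
      rw [Int.fract]
      have := hper_int (x - ⌊x⌋) ⌊x⌋
      rw [sub_add_cancel] at this
      rw [this]
    rw [this]
    exact ⟨hxm hfr, hxM hfr⟩
  have hmM : m ≤ M := (hbound xm).2
  -- surjectivity forces M ≥ m + 1
  have hM1 : m + 1 ≤ M := by
    by_contra hcon
    push_neg at hcon
    set ξ := (M + m + 1)/2 with hξ
    obtain ⟨w, hw⟩ := hsurj ((ξ : ℝ) : UnitAddCircle)
    obtain ⟨x, -, rfl⟩ := exists_rep_Ico 0 w
    rw [hFg] at hw
    obtain ⟨n, hn⟩ := ecoe_eq.1 hw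
    have hb := hbound x
    have c1 : (0:ℝ) < n := by
      have : g x ≤ M := hb.2
      have : M < ξ := by rw [hξ]; linarith
      linarith
    have c2 : (n:ℝ) < 1 := by
      have : m ≤ g x := hb.1
      have : ξ < m + 1 := by rw [hξ]; linarith
      linarith
    have d1 : (0:ℤ) < n := by exact_mod_cast c1
    have d2 : n < 1 := by exact_mod_cast c2
    omega
  have hmltM : m < M := by linarith
  -- move xM into (xm, xm + 1)
  set t0 := xm + Int.fract (xM - xm) with ht0
  have hgt0 : g t0 = M := by
    rw [ht0, Int.fract]
    have := hper_int (xm + (xM - xm - ⌊xM - xm⌋)) ⌊xM - xm⌋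
    rw [show xm + (xM - xm - (⌊xM - xm⌋:ℝ)) + (⌊xM - xm⌋:ℝ) = xM by ring] at this
    rw [← this]
  have ht0ne : t0 ≠ xm := by
    intro h
    rw [h] at hgt0
    rw [← hgt0] at hmltM
    exact lt_irrefl _ hmltM
  have ht0m : t0 ∈ Set.Ioo xm (xm + 1) := by
    constructor
    · rcases lt_or_eq_of_le (Int.fract_nonneg (xM - xm)) with h | h
      · rw [ht0]; linarith
      · exfalso; apply ht0ne; rw [ht0, ← h]; ring
    · rw [ht0]; linarith [Int.fract_lt_one (xM - xm)]
  -- choose v ∈ (m, m+1) avoiding M + ℤ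
  have hv : ∃ v : ℝ, m < v ∧ v < m + 1 ∧ (∀ n : ℤ, M ≠ v + n) := by
    by_contra hcon
    push_neg at hcon
    obtain ⟨n₁, hn₁⟩ := hcon (m + 2⁻¹) (by linarith) (by linarith)
    obtain ⟨n₂, hn₂⟩ := hcon (m + 3⁻¹) (by linarith) (by norm_num)
    have : (6*(n₁ - n₂) : ℝ) = -1 := by push_cast; linarith
    have : (6*(n₁ - n₂) : ℤ) = -1 := by exact_mod_cast this
    omega
  obtain ⟨v, hv1, hv2, hv3⟩ := hv
  have hvM : v < M := by linarith
  -- crossings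
  obtain ⟨p, hpm, hp⟩ : ∃ p ∈ Set.Ioo xm t0, g p = v := by
    apply intermediate_value_Ioo ht0m.1.le hgc.continuousOn
    rw [hgt0, ← hm]
    exact ⟨hv1, hvM⟩
  obtain ⟨q, hqm, hq⟩ : ∃ q ∈ Set.Ioo t0 (xm + 1), g q = v := by
    apply intermediate_value_Ioo' ht0m.2.le hgc.continuousOn
    rw [hgt0]
    have : g (xm + 1) = m := by rw [hper]
    rw [this]
    exact ⟨hv1, hvM⟩
  refine not_preconnected_fiber hFg hperZ (v := v)
    hpm.1 hpm.2 hqm.1 hqm.2 ⟨0, by rw [hp]; norm_num⟩ ⟨0, by rw [hq]; norm_num⟩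
    ?_ ?_ (hconn _)
  · intro n hn
    rw [← hm] at hn
    have c1 : (0:ℝ) < -n := by push_cast; linarith
    have c2 : (-n:ℝ) < 1 := by push_cast; linarith
    have d1 : (0:ℤ) < -n := by exact_mod_cast c1
    have d2 : (-n:ℤ) < 1 := by exact_mod_cast c2
    omega
  · intro n hn
    rw [hgt0] at hn
    exact hv3 n hn

end Degree

end Aux

theorem monotone_iff_degree_one_connected_fibers
    (F : UnitAddCircle → UnitAddCircle) (hF : Continuous F)
    (hsurj : Function.Surjective F) :
    MonotoneCircOn F Set.univ ↔
      HasDegreeOne F ∧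
        ∀ y : UnitAddCircle, IsConnected (F ⁻¹' {y}) ∧ F ⁻¹' {y} ≠ Set.univ := by
  constructor
  · intro hmono
    have hconn : ∀ y, IsPreconnected (F ⁻¹' {y}) := fiber_preconnected hF hsurj hmono
    have hfib : ∀ y : UnitAddCircle, IsConnected (F ⁻¹' {y}) ∧ F ⁻¹' {y} ≠ Set.univ := by
      intro y
      obtain ⟨x, hx⟩ := hsurj y
      exact ⟨⟨⟨x, by simp [hx]⟩, hconn y⟩, fiber_ne_univ hsurj y⟩
    refine ⟨?_, hfib⟩
    obtain ⟨g, hgc, hFg⟩ := exists_lift hF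
    obtain ⟨dg, hdg⟩ := exists_degree hgc hFg
    -- the reflected map and its lift
    set F' : UnitAddCircle → UnitAddCircle := fun z => F (-z) with hF'
    set g' : ℝ → ℝ := fun x => g (-x) with hg'
    have hFg' : ∀ x : ℝ, F' (x : UnitAddCircle) = ((g' x : ℝ) : UnitAddCircle) := by
      intro x
      rw [hF', hg']
      simp only
      rw [← QuotientAddGroup.mk_neg]
      exact hFg (-x)
    have hgc' : Continuous g' := hgc.comp continuous_neg
    have hconn' : ∀ y, IsPreconnected (F' ⁻¹' {y}) := by
      intro y
      have himg : F' ⁻¹' {y} = (fun z : UnitAddCircle => -z) '' (F ⁻¹' {y}) := by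
        ext z
        simp only [hF', Set.mem_preimage, Set.mem_singleton_iff, Set.mem_image]
        constructor
        · intro hz; exact ⟨-z, hz, by simp⟩
        · rintro ⟨w, hw, rfl⟩; simpa using hw
      rw [himg]
      exact (hconn y).image _ continuous_neg.continuousOn
    have hd1 : dg = 1 := by
      by_contra hne
      rcases (by omega : 2 ≤ dg ∨ dg = 0 ∨ dg = -1 ∨ dg ≤ -2) with h | h | h | h
      · exact degree_ge_two_absurd hgc hFg hconn h hdg
      · refine degree_zero_absurd hgc hFg hsurj hconn (fun x => ?_)
        have := hdg x
        rw [h] at this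
        simpa using this
      · -- degree -1 : orientation-reversing, contradicts monotonicity
        have hper'1 : ∀ x, g' (x+1) = g' x + 1 := by
          intro x
          rw [hg']
          simp only
          have hthis := hdg (-x-1)
          rw [h] at hthis
          rw [show -x-1+1 = -x by ring] at hthis
          push_cast at hthis
          rw [show -(x+1) = -x-1 by ring]
          linarith
        have hmono' := monotone_lift_of_preconnected_fibers hgc' hper'1 hFg' hconn'
        have hint : ∀ (x : ℝ) (n : ℤ), g' (x + n) = g' x + n := by
          intro x n
          induction n using Int.induction_on with
          | zero => simp
          | succ k ih =>
            have harg : ((((k:ℤ) + 1 : ℤ)) : ℝ) = (((k:ℤ)) : ℝ) + 1 := by push_cast; ring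
            rw [harg, ← add_assoc, hper'1, ih]
            push_cast
            ring
          | pred k ih =>
            have hstep := hper'1 (x + ((-(k:ℤ)-1 : ℤ) : ℝ))
            have harg : x + ((-(k:ℤ)-1 : ℤ) : ℝ) + 1 = x + ((-(k:ℤ) : ℤ) : ℝ) := by
              push_cast; ring
            rw [harg, ih] at hstep
            push_cast at hstep ⊢
            linarith
        have hg'surj : ∀ v : ℝ, ∃ x, g' x = v := by
          intro v
          obtain ⟨n, hn⟩ := exists_nat_gt (|v - g' 0| + 1)
          have h1 : g' (-(n:ℝ)) = g' 0 - n := by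
            have := hint 0 (-(n:ℤ))
            rw [zero_add] at this
            push_cast at this
            linarith
          have h2 : g' ((n:ℝ)) = g' 0 + n := by
            have := hint 0 ((n:ℤ))
            rw [zero_add] at this
            push_cast at this
            linarith
          have habs := abs_lt.1 (by linarith : |v - g' 0| < n)
          have hmem : v ∈ Set.Icc (g' (-(n:ℝ))) (g' ((n:ℝ))) := by
            rw [h1, h2]
            constructor <;> linarith [habs.1, habs.2]
          obtain ⟨x, -, hx⟩ := intermediate_value_Icc
            (by linarith [habs.1, habs.2, abs_nonneg (v - g' 0)] : -(n:ℝ) ≤ (n:ℝ))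
            hgc'.continuousOn hmem
          exact ⟨x, hx⟩
        obtain ⟨x₁, hx₁⟩ := hg'surj 0
        obtain ⟨x₂, hx₂⟩ := hg'surj 3⁻¹
        obtain ⟨x₃, hx₃⟩ := hg'surj (2*3⁻¹)
        have h12 : x₁ < x₂ := by
          by_contra hle
          push_neg at hle
          have := hmono' hle
          rw [hx₁, hx₂] at this
          norm_num at this
        have h23 : x₂ < x₃ := by
          by_contra hle
          push_neg at hle
          have := hmono' hle
          rw [hx₂, hx₃] at this
          norm_num at this
        have h31 : x₃ < x₁ + 1 := by
          by_contra hle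
          push_neg at hle
          have := hmono' hle
          rw [hper'1, hx₁, hx₃] at this
          norm_num at this
        have T : PosOriented ((-x₃ : ℝ) : UnitAddCircle) ((-x₂ : ℝ) : UnitAddCircle)
            ((-x₁ : ℝ) : UnitAddCircle) :=
          posOriented_mk (by linarith) (by linarith) (by linarith)
        have himg : ∀ i : ℝ, F ((-i : ℝ) : UnitAddCircle) = ((g' i : ℝ) : UnitAddCircle) := by
          intro i
          rw [QuotientAddGroup.mk_neg]
          exact hFg' i
        have hNeg : NegOriented (F ((-x₃:ℝ):UnitAddCircle)) (F ((-x₂:ℝ):UnitAddCircle))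
            (F ((-x₁:ℝ):UnitAddCircle)) := by
          rw [NegOriented, himg x₁, himg x₂, himg x₃, hx₁, hx₂, hx₃]
          exact posOriented_mk (by norm_num) (by norm_num) (by norm_num)
        exact (hmono _ (Set.mem_univ _) _ (Set.mem_univ _) _ (Set.mem_univ _)).1 T hNeg
      · -- degree ≤ -2 : reflected map has degree ≥ 2
        have hper' : ∀ x, g' (x+1) = g' x + ((-dg:ℤ):ℝ) := by
          intro x
          rw [hg']
          simp only
          have hthis := hdg (-x-1)
          rw [show -x-1+1 = -x by ring] at hthis
          push_cast at hthis ⊢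
          rw [show -(x+1) = -x-1 by ring]
          linarith
        exact degree_ge_two_absurd hgc' hFg' hconn' (by omega) hper'
    refine ⟨g, hgc, fun t => (hFg t).symm, fun t => ?_⟩
    have := hdg t
    rw [hd1] at this
    simpa using this
  · rintro ⟨⟨g, hgc, hlift, hper⟩, hfib⟩
    have hFg : ∀ x : ℝ, F (x : UnitAddCircle) = ((g x : ℝ) : UnitAddCircle) :=
      fun x => (hlift x).symm
    have hconn : ∀ y, IsPreconnected (F ⁻¹' {y}) := fun y => (hfib y).1.isPreconnected
    exact monotoneCircOn_of_monotone_lift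
      (monotone_lift_of_preconnected_fibers hgc hper hFg hconn) hper hFg
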